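/- Let X be an infinite chain with X^0 = ∅, and let α be an order-preserving self-map of X such that α(X^+) ∩ X^- ≠ ∅ or α(X^-) ∩ X^+ ≠ ∅. Then α is not in the subsemigroup generated by J = {β ∈ O(X) : |Im(β)| = |X|}. -/

import Mathlib

section Aux
variable {X : Type*} [LinearOrder X] [Infinite X]

private lemma aux_not_both (x : X) :
    ¬ (Cardinal.mk ↥(Set.Iic x) < Cardinal.mk X ∧ Cardinal.mk ↥(Set.Ici x) < Cardinal.mk X) := by
  rintro ⟨h1, h2⟩
  have hle : Cardinal.mk X ≤ Cardinal.mk ↥(Set.Iic x) + Cardinal.mk ↥(Set.Ici x) := by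
    have := Cardinal.mk_union_le (Set.Iic x) (Set.Ici x)
    rwa [Set.Iic_union_Ici, Cardinal.mk_univ] at this
  exact absurd (lt_of_le_of_lt hle
    (Cardinal.add_lt_of_lt (Cardinal.infinite_iff.mp ‹Infinite X›) h1 h2)) (lt_irrefl _)

private lemma aux_dichot
    (hX0 : ∀ x : X, ¬ (Cardinal.mk ↥(Set.Iic x) = Cardinal.mk X ∧
      Cardinal.mk ↥(Set.Ici x) = Cardinal.mk X)) (x : X)
    (h : ¬ Cardinal.mk ↥(Set.Iic x) < Cardinal.mk X) :
    Cardinal.mk ↥(Set.Ici x) < Cardinal.mk X := by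
  have h1 : Cardinal.mk ↥(Set.Iic x) = Cardinal.mk X :=
    le_antisymm (Cardinal.mk_set_le _) (not_lt.mp h)
  have h2 : Cardinal.mk ↥(Set.Ici x) ≠ Cardinal.mk X := fun h2 => hX0 x ⟨h1, h2⟩
  exact lt_of_le_of_ne (Cardinal.mk_set_le _) h2

private lemma aux_dichot'
    (hX0 : ∀ x : X, ¬ (Cardinal.mk ↥(Set.Iic x) = Cardinal.mk X ∧
      Cardinal.mk ↥(Set.Ici x) = Cardinal.mk X)) (x : X)
    (h : ¬ Cardinal.mk ↥(Set.Ici x) < Cardinal.mk X) :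
    Cardinal.mk ↥(Set.Iic x) < Cardinal.mk X := by
  have h2 : Cardinal.mk ↥(Set.Ici x) = Cardinal.mk X :=
    le_antisymm (Cardinal.mk_set_le _) (not_lt.mp h)
  have h1 : Cardinal.mk ↥(Set.Iic x) ≠ Cardinal.mk X := fun h1 => hX0 x ⟨h1, h2⟩
  exact lt_of_le_of_ne (Cardinal.mk_set_le _) h1

private lemma aux_key {β : X → X} (hβ : Monotone β)
    (hr : Cardinal.mk ↥(Set.range β) = Cardinal.mk X) (x : X)
    (h1 : Cardinal.mk ↥(Set.Ici x) < Cardinal.mk X) :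
    ¬ Cardinal.mk ↥(Set.Iic (β x)) < Cardinal.mk X := by
  intro h2
  have hsub : Set.range β ⊆ Set.Iic (β x) ∪ (β '' Set.Ici x) := by
    rintro _ ⟨z, rfl⟩
    rcases le_total z x with hz | hz
    · exact Or.inl (hβ hz)
    · exact Or.inr ⟨z, hz, rfl⟩
  have : Cardinal.mk ↥(Set.range β) <
      Cardinal.mk X :=
    lt_of_le_of_lt (le_trans (Cardinal.mk_le_mk_of_subset hsub)
      (le_trans (Cardinal.mk_union_le _ _)
        (add_le_add le_rfl (Cardinal.mk_image_le))))
      (Cardinal.add_lt_of_lt (Cardinal.infinite_iff.mp ‹Infinite X›) h2 h1)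
  exact absurd hr this.ne

private lemma aux_key' {β : X → X} (hβ : Monotone β)
    (hr : Cardinal.mk ↥(Set.range β) = Cardinal.mk X) (x : X)
    (h1 : Cardinal.mk ↥(Set.Iic x) < Cardinal.mk X) :
    ¬ Cardinal.mk ↥(Set.Ici (β x)) < Cardinal.mk X := by
  intro h2
  have hsub : Set.range β ⊆ (β '' Set.Iic x) ∪ Set.Ici (β x) := by
    rintro _ ⟨z, rfl⟩
    rcases le_total z x with hz | hz
    · exact Or.inl ⟨z, hz, rfl⟩
    · exact Or.inr (hβ hz)
  have : Cardinal.mk ↥(Set.range β) < Cardinal.mk X :=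
    lt_of_le_of_lt (le_trans (Cardinal.mk_le_mk_of_subset hsub)
      (le_trans (Cardinal.mk_union_le _ _)
        (add_le_add (Cardinal.mk_image_le) le_rfl)))
      (Cardinal.add_lt_of_lt (Cardinal.infinite_iff.mp ‹Infinite X›) h1 h2)
  exact absurd hr this.ne

end Aux

theorem stmt_5 {X : Type*} [LinearOrder X] [Infinite X]
    (hX0 : ∀ x : X, ¬ (Cardinal.mk ↥(Set.Iic x) = Cardinal.mk X ∧
      Cardinal.mk ↥(Set.Ici x) = Cardinal.mk X))
    (α : X → X) (hα : Monotone α)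
    (h : (∃ x : X, Cardinal.mk ↥(Set.Ici x) < Cardinal.mk X ∧
            Cardinal.mk ↥(Set.Iic (α x)) < Cardinal.mk X) ∨
         (∃ x : X, Cardinal.mk ↥(Set.Iic x) < Cardinal.mk X ∧
            Cardinal.mk ↥(Set.Ici (α x)) < Cardinal.mk X)) :
    ¬ ∃ l : List (X → X), l ≠ [] ∧
      (∀ f ∈ l, Monotone f ∧ Cardinal.mk ↥(Set.range f) = Cardinal.mk X) ∧
      α = l.foldr (· ∘ ·) id := by
  rintro ⟨l, -, hmem, rfl⟩
  -- invariant: foldr preserves both classes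
  have inv : ∀ (l : List (X → X)), (∀ f ∈ l, Monotone f ∧
      Cardinal.mk ↥(Set.range f) = Cardinal.mk X) → ∀ x : X,
      (Cardinal.mk ↥(Set.Ici x) < Cardinal.mk X →
        Cardinal.mk ↥(Set.Ici (l.foldr (· ∘ ·) id x)) < Cardinal.mk X) ∧
      (Cardinal.mk ↥(Set.Iic x) < Cardinal.mk X →
        Cardinal.mk ↥(Set.Iic (l.foldr (· ∘ ·) id x)) < Cardinal.mk X) := by
    intro l hl
    induction l with
    | nil => intro x; exact ⟨id, id⟩
    | cons f t ih =>
      intro x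
      have hf := hl f List.mem_cons_self
      have iht := ih (fun g hg => hl g (List.mem_cons_of_mem f hg)) x
      set y := t.foldr (· ∘ ·) id x with hy
      have hfold : (f :: t).foldr (· ∘ ·) id x = f y := rfl
      rw [hfold]
      constructor
      · intro hx
        have hy1 := iht.1 hx
        exact aux_dichot hX0 _ (aux_key hf.1 hf.2 y hy1)
      · intro hx
        have hy1 := iht.2 hx
        exact aux_dichot' hX0 _ (aux_key' hf.1 hf.2 y hy1)
  rcases h with ⟨x, h1, h2⟩ | ⟨x, h1, h2⟩
  · exact aux_not_both _ ⟨h2, (inv l hmem x).1 h1⟩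
  · exact aux_not_both _ ⟨(inv l hmem x).2 h1, h2⟩
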